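/- Let G be a finite simple graph with vertex set V and edge set E, and let S ⊆ E. Let F ⊆ V be such that the induced subgraph G[F] is connected and no edge of S has both endpoints in F. Let v ∈ V ∖ F be a vertex with at least two neighbours in F such that at least one edge joining v to a vertex of F belongs to S. Then the induced subgraph G[F ∪ {v}] contains a simple cycle that passes through v and contains an edge of S. -/

import Mathlib

/-- Let `F ⊆ V` induce a connected subgraph with no edge of `S`
inside it, and let `v ∉ F` have at least two neighbours in `F`, at least one of the
edges from `v` to `F` being in `S`. Then `G[F ∪ {v}]` contains a simple cycle through
`v` containing an edge of `S`. -/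
theorem important_cycle_through_v {V : Type} [Fintype V]
    (G : SimpleGraph V) (S : Set (Sym2 V)) (hS : S ⊆ G.edgeSet)
    (F : Set V) (hconn : (G.induce F).Connected)
    (hFS : ∀ x y : V, x ∈ F → y ∈ F → s(x, y) ∉ S)
    (v : V) (hv : v ∉ F)
    (htwo : ∃ a ∈ F, ∃ b ∈ F, a ≠ b ∧ G.Adj v a ∧ G.Adj v b)
    (hSv : ∃ a ∈ F, G.Adj v a ∧ s(v, a) ∈ S) :
    ∃ c : G.Walk v v, c.IsCycle ∧ (∀ x ∈ c.support, x ∈ F ∪ {v}) ∧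
      ∃ e ∈ c.edges, e ∈ S := by
  classical
  obtain ⟨a, ha, hva, haS⟩ := hSv
  obtain ⟨a', ha', b', hb', hab', hva', hvb'⟩ := htwo
  obtain ⟨b, hb, hba, hvb⟩ : ∃ b ∈ F, b ≠ a ∧ G.Adj v b := by
    by_cases h : a' = a
    · exact ⟨b', hb', by simpa [h] using hab'.symm, hvb'⟩
    · exact ⟨a', ha', h, hva'⟩
  obtain ⟨w0⟩ := hconn ⟨b, hb⟩ ⟨a, ha⟩
  set emb := SimpleGraph.Embedding.induce (G := G) F
  set w1 : G.Walk b a := w0.map emb.toHom with hw1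
  set p : G.Walk b a := (w1.toPath : G.Walk b a) with hp
  have hpF : ∀ x ∈ p.support, x ∈ F := by
    intro x hx
    have hx' : x ∈ w1.support := SimpleGraph.Walk.support_toPath_subset w1 hx
    replace hx' : x ∈ (w0.map emb.toHom).support := hx'
    rw [SimpleGraph.Walk.support_map] at hx'
    obtain ⟨y, _, rfl⟩ := List.mem_map.mp hx'
    exact y.2
  have hpPath : p.IsPath := w1.toPath.2
  have hvnp : v ∉ p.support := fun h => hv (hpF v h)
  have hqPath : (p.concat hva.symm).IsPath := by
    rw [SimpleGraph.Walk.isPath_def, SimpleGraph.Walk.support_concat,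
      List.nodup_append]
    refine ⟨hpPath.support_nodup, List.nodup_singleton v, ?_⟩
    intro x hx y hy hxy
    rw [List.mem_singleton] at hy
    rw [hxy, hy] at hx
    exact hvnp hx
  refine ⟨SimpleGraph.Walk.cons hvb (p.concat hva.symm), ?_, ?_, ?_⟩
  · rw [SimpleGraph.Walk.cons_isCycle_iff]
    refine ⟨hqPath, ?_⟩
    rw [SimpleGraph.Walk.edges_concat]
    simp only [List.concat_eq_append, List.mem_append, List.mem_singleton]
    rintro (h | h)
    · exact hv (hpF v (SimpleGraph.Walk.fst_mem_support_of_mem_edges p h))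
    · rw [Sym2.eq_iff] at h
      rcases h with ⟨h1, h2⟩ | ⟨h1, h2⟩
      · exact hv (h1 ▸ ha)
      · exact hba h2
  · intro x hx
    rw [SimpleGraph.Walk.support_cons] at hx
    rcases List.mem_cons.mp hx with h | h
    · exact Or.inr h
    · rw [SimpleGraph.Walk.support_concat, List.mem_append] at h
      rcases h with h | h
      · exact Or.inl (hpF x h)
      · simp only [List.mem_singleton] at h; exact Or.inr h
  · refine ⟨s(v, a), ?_, haS⟩
    rw [SimpleGraph.Walk.edges_cons, SimpleGraph.Walk.edges_concat]
    simp [Sym2.eq_swap]
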